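/- For every sufficiently small d₀ ∈ (0,1) and every ε > 0 sufficiently small in terms of d₀ there exists an integer m₀ = m₀(ε, d₀) such that for all d ≥ d₀ the following holds: if G is a bipartite graph with vertex classes A and B of size |A| = |B| = m ≥ m₀ which is (ε, d)-super-regular, then G contains two edge-disjoint spanning subgraphs S₁ and S₂ each of which is (2ε, d/2)-super-regular. -/

import Mathlib

open scoped Classical

open Finset

lemma prod_if_card {ι : Type*} [DecidableEq ι] (s F : Finset ι) (x : ℝ) :
    ∏ i ∈ s, (if i ∈ F then x else 1) = x ^ (s ∩ F).card := by
  classical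
  rw [Finset.prod_ite, Finset.prod_const, Finset.prod_const, one_pow, mul_one,
    Finset.filter_mem_eq_inter]

lemma genfun {ι : Type*} [DecidableEq ι] (E F : Finset ι) (hFE : F ⊆ E) (x : ℝ) :
    ∑ S ∈ E.powerset, x ^ (S ∩ F).card = (x + 1) ^ F.card * 2 ^ (E.card - F.card) := by
  classical
  have h := Finset.prod_add (fun i => if i ∈ F then x else (1:ℝ)) (fun _ => (1:ℝ)) E
  simp only [Finset.prod_const, one_pow, mul_one, prod_if_card] at h
  rw [← h]
  have : ∀ i ∈ E, ((if i ∈ F then x else 1) + 1) = (if i ∈ F then x + 1 else 2) := by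
    intro i _; split <;> norm_num
  rw [Finset.prod_congr rfl this, Finset.prod_ite, Finset.prod_const, Finset.prod_const,
    Finset.filter_mem_eq_inter, Finset.inter_eq_right.mpr hFE,
    Finset.filter_not, Finset.filter_mem_eq_inter, Finset.inter_eq_right.mpr hFE,
    Finset.card_sdiff_of_subset hFE]

lemma chernoff_upper {ι : Type*} [DecidableEq ι] (E F : Finset ι) (hFE : F ⊆ E) (l a : ℝ) (hl : 0 ≤ l) :
    ((E.powerset.filter fun S => a ≤ ((S ∩ F).card : ℝ)).card : ℝ) * Real.exp (l * a)
      ≤ (Real.exp l + 1) ^ F.card * 2 ^ (E.card - F.card) := by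
  classical
  rw [← genfun E F hFE (Real.exp l)]
  calc ((E.powerset.filter fun S => a ≤ ((S ∩ F).card : ℝ)).card : ℝ) * Real.exp (l * a)
      = ∑ _S ∈ E.powerset.filter fun S => a ≤ ((S ∩ F).card : ℝ), Real.exp (l * a) := by
        rw [Finset.sum_const, nsmul_eq_mul]
    _ ≤ ∑ S ∈ E.powerset.filter fun S => a ≤ ((S ∩ F).card : ℝ), Real.exp l ^ (S ∩ F).card := by
        refine Finset.sum_le_sum fun S hS => ?_
        rw [← Real.exp_nat_mul, mul_comm l]
        exact Real.exp_le_exp.mpr (mul_le_mul_of_nonneg_right (Finset.mem_filter.mp hS).2 hl)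
    _ ≤ ∑ S ∈ E.powerset, Real.exp l ^ (S ∩ F).card := by
        refine Finset.sum_le_sum_of_subset_of_nonneg (Finset.filter_subset _ _) fun _ _ _ => ?_
        positivity

lemma chernoff_lower {ι : Type*} [DecidableEq ι] (E F : Finset ι) (hFE : F ⊆ E) (l a : ℝ) (hl : 0 ≤ l) :
    ((E.powerset.filter fun S => ((S ∩ F).card : ℝ) ≤ a).card : ℝ) * Real.exp (-(l * a))
      ≤ (Real.exp (-l) + 1) ^ F.card * 2 ^ (E.card - F.card) := by
  classical
  rw [← genfun E F hFE (Real.exp (-l))]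
  calc ((E.powerset.filter fun S => ((S ∩ F).card : ℝ) ≤ a).card : ℝ) * Real.exp (-(l * a))
      = ∑ _S ∈ E.powerset.filter fun S => ((S ∩ F).card : ℝ) ≤ a, Real.exp (-(l * a)) := by
        rw [Finset.sum_const, nsmul_eq_mul]
    _ ≤ ∑ S ∈ E.powerset.filter fun S => ((S ∩ F).card : ℝ) ≤ a,
          Real.exp (-l) ^ (S ∩ F).card := by
        refine Finset.sum_le_sum fun S hS => ?_
        rw [← Real.exp_nat_mul]
        refine Real.exp_le_exp.mpr ?_
        have := (Finset.mem_filter.mp hS).2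
        nlinarith
    _ ≤ ∑ S ∈ E.powerset, Real.exp (-l) ^ (S ∩ F).card := by
        refine Finset.sum_le_sum_of_subset_of_nonneg (Finset.filter_subset _ _) fun _ _ _ => ?_
        positivity
open Finset

lemma tail_bound {ι : Type*} [DecidableEq ι] (E F : Finset ι) (hFE : F ⊆ E) (t : ℝ) (ht : 0 ≤ t) :
    ((E.powerset.filter fun S =>
        t < |((S ∩ F).card : ℝ) - (F.card : ℝ)/2|).card : ℝ)
      ≤ 2 * 2 ^ E.card * Real.exp (-(t^2) / (2 * F.card)) := by
  classical
  rcases Nat.eq_zero_or_pos F.card with h0 | hpos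
  · have : (E.powerset.filter fun S =>
        t < |((S ∩ F).card : ℝ) - (F.card : ℝ)/2|) = ∅ := by
      refine Finset.filter_eq_empty_iff.mpr fun S _ => ?_
      have hF : F = ∅ := Finset.card_eq_zero.mp h0
      simp [hF, not_lt, ht]
    rw [this]
    simp only [Finset.card_empty, Nat.cast_zero]
    positivity
  set n : ℝ := (F.card : ℝ) with hn
  have hnpos : (0:ℝ) < n := by rw [hn]; exact_mod_cast hpos
  set l : ℝ := t / n with hl
  have hl0 : 0 ≤ l := div_nonneg ht hnpos.le
  -- the common cosh bound
  have hpow : (0:ℝ) < 2 ^ (E.card - F.card) := by positivity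
  have hcosh : (2 * Real.cosh (l/2)) ^ F.card * 2 ^ (E.card - F.card) * Real.exp (-(l*t))
      ≤ 2 ^ E.card * Real.exp (-(t^2) / (2 * n)) := by
    have h1 : Real.cosh (l/2) ≤ Real.exp (l^2/8) := by
      have := Real.cosh_le_exp_half_sq (l/2)
      calc Real.cosh (l/2) ≤ Real.exp ((l/2)^2/2) := this
        _ = Real.exp (l^2/8) := by ring_nf
    have h2 : (2 * Real.cosh (l/2)) ^ F.card ≤ 2 ^ F.card * Real.exp (l^2/8 * F.card) := by
      calc (2 * Real.cosh (l/2)) ^ F.card ≤ (2 * Real.exp (l^2/8)) ^ F.card := by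
            refine pow_le_pow_left₀ (by positivity) (by linarith) _
        _ = 2 ^ F.card * Real.exp (l^2/8 * F.card) := by
            rw [mul_pow, mul_comm (l^2/8), Real.exp_nat_mul]
    have h3 : l^2/8 * n - l*t = -(7/8) * (t^2/n) := by
      rw [hl]; field_simp; ring
    have h4 : Real.exp (l^2/8 * n) * Real.exp (-(l*t)) ≤ Real.exp (-(t^2) / (2*n)) := by
      rw [← Real.exp_add]
      refine Real.exp_le_exp.mpr ?_
      rw [show l^2/8 * n + -(l*t) = l^2/8*n - l*t by ring, h3,
        show -(t^2) / (2*n) = -(1/2) * (t^2/n) by ring]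
      have : 0 ≤ t^2/n := by positivity
      linarith [this]
    calc (2 * Real.cosh (l/2)) ^ F.card * 2 ^ (E.card - F.card) * Real.exp (-(l*t))
        ≤ (2 ^ F.card * Real.exp (l^2/8 * n)) * 2 ^ (E.card - F.card) * Real.exp (-(l*t)) := by
          have he : (0:ℝ) ≤ Real.exp (-(l*t)) := (Real.exp_pos _).le
          exact mul_le_mul_of_nonneg_right (mul_le_mul_of_nonneg_right h2 hpow.le) he
      _ = (2 ^ F.card * 2 ^ (E.card - F.card)) * (Real.exp (l^2/8 * n) * Real.exp (-(l*t))) := by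
          ring
      _ ≤ (2 ^ F.card * 2 ^ (E.card - F.card)) * Real.exp (-(t^2) / (2*n)) := by
          refine mul_le_mul_of_nonneg_left h4 (by positivity)
      _ = 2 ^ E.card * Real.exp (-(t^2) / (2*n)) := by
          rw [← pow_add, Nat.add_sub_cancel' (Finset.card_le_card hFE)]
  -- upper tail
  have hup : ((E.powerset.filter fun S => n/2 + t ≤ ((S ∩ F).card : ℝ)).card : ℝ)
      ≤ 2 ^ E.card * Real.exp (-(t^2) / (2 * n)) := by
    have hc := chernoff_upper E F hFE l (n/2 + t) hl0
    have e0 : Real.exp l + 1 = 2 * Real.cosh (l/2) * Real.exp (l/2) := by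
      rw [Real.cosh_eq, mul_div_cancel₀ _ (two_ne_zero), add_mul, ← Real.exp_add, ← Real.exp_add]
      norm_num
    have hkey : (Real.exp l + 1) ^ F.card * 2 ^ (E.card - F.card)
        = (2 * Real.cosh (l/2)) ^ F.card * 2 ^ (E.card - F.card) * Real.exp (-(l*t))
          * Real.exp (l * (n/2 + t)) := by
      rw [e0, mul_pow, ← Real.exp_nat_mul, ← hn]
      rw [show Real.exp (n * (l/2)) = Real.exp (-(l*t)) * Real.exp (l * (n/2 + t)) by
        rw [← Real.exp_add]; congr 1; ring]
      ring
    have hepos : (0:ℝ) < Real.exp (l * (n/2 + t)) := Real.exp_pos _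
    rw [hkey] at hc
    have := le_of_mul_le_mul_right hc hepos
    exact this.trans hcosh
  -- lower tail
  have hlo : ((E.powerset.filter fun S => ((S ∩ F).card : ℝ) ≤ n/2 - t).card : ℝ)
      ≤ 2 ^ E.card * Real.exp (-(t^2) / (2 * n)) := by
    have hc := chernoff_lower E F hFE l (n/2 - t) hl0
    have e0 : Real.exp (-l) + 1 = 2 * Real.cosh (l/2) * Real.exp (-(l/2)) := by
      rw [Real.cosh_eq, mul_div_cancel₀ _ (two_ne_zero), add_mul, ← Real.exp_add, ← Real.exp_add,
        show l/2 + -(l/2) = 0 by ring, show -(l/2) + -(l/2) = -l by ring, Real.exp_zero]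
      ring
    have hkey : (Real.exp (-l) + 1) ^ F.card * 2 ^ (E.card - F.card)
        = (2 * Real.cosh (l/2)) ^ F.card * 2 ^ (E.card - F.card) * Real.exp (-(l*t))
          * Real.exp (-(l * (n/2 - t))) := by
      rw [e0, mul_pow, ← Real.exp_nat_mul, ← hn]
      rw [show Real.exp (n * -(l/2)) = Real.exp (-(l*t)) * Real.exp (-(l * (n/2 - t))) by
        rw [← Real.exp_add]; congr 1; ring]
      ring
    have hepos : (0:ℝ) < Real.exp (-(l * (n/2 - t))) := Real.exp_pos _
    rw [hkey] at hc
    have := le_of_mul_le_mul_right hc hepos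
    exact this.trans hcosh
  -- combine
  have hsub : (E.powerset.filter fun S => t < |((S ∩ F).card : ℝ) - n/2|)
      ⊆ (E.powerset.filter fun S => n/2 + t ≤ ((S ∩ F).card : ℝ))
        ∪ (E.powerset.filter fun S => ((S ∩ F).card : ℝ) ≤ n/2 - t) := by
    intro S hS
    rw [Finset.mem_filter] at hS
    rcases lt_or_ge (((S ∩ F).card : ℝ)) (n/2) with hc | hc
    · refine Finset.mem_union_right _ (Finset.mem_filter.mpr ⟨hS.1, ?_⟩)
      have : t < |((S ∩ F).card : ℝ) - n/2| := hS.2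
      rw [abs_of_neg (by linarith)] at this
      linarith
    · refine Finset.mem_union_left _ (Finset.mem_filter.mpr ⟨hS.1, ?_⟩)
      have : t < |((S ∩ F).card : ℝ) - n/2| := hS.2
      rw [abs_of_nonneg (by linarith)] at this
      linarith
  calc ((E.powerset.filter fun S => t < |((S ∩ F).card : ℝ) - n/2|).card : ℝ)
      ≤ (((E.powerset.filter fun S => n/2 + t ≤ ((S ∩ F).card : ℝ))
        ∪ (E.powerset.filter fun S => ((S ∩ F).card : ℝ) ≤ n/2 - t)).card : ℝ) := by
        exact_mod_cast Finset.card_le_card hsub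
    _ ≤ ((E.powerset.filter fun S => n/2 + t ≤ ((S ∩ F).card : ℝ)).card : ℝ)
        + ((E.powerset.filter fun S => ((S ∩ F).card : ℝ) ≤ n/2 - t).card : ℝ) := by
        exact_mod_cast Finset.card_union_le _ _
    _ ≤ 2 ^ E.card * Real.exp (-(t^2) / (2 * n)) + 2 ^ E.card * Real.exp (-(t^2) / (2 * n)) :=
        add_le_add hup hlo
    _ = 2 * 2 ^ E.card * Real.exp (-(t^2) / (2 * n)) := by ring

/-- Number of edges of a bipartite graph `E ⊆ α × β` between `X ⊆ α` and `Y ⊆ β`. -/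
noncomputable def eBip {α β : Type*} (E : Finset (α × β)) (X : Finset α) (Y : Finset β) : ℕ :=
  (E.filter fun e => e.1 ∈ X ∧ e.2 ∈ Y).card

/-- Density of a bipartite graph between `X` and `Y`. -/
noncomputable def densBip {α β : Type*} (E : Finset (α × β)) (X : Finset α) (Y : Finset β) : ℝ :=
  (eBip E X Y : ℝ) / ((X.card : ℝ) * (Y.card : ℝ))

/-- Degree of a vertex of the first class. -/
noncomputable def degL {α β : Type*} (E : Finset (α × β)) (a : α) : ℕ :=
  (E.filter fun e => e.1 = a).card

/-- Degree of a vertex of the second class. -/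
noncomputable def degR {α β : Type*} (E : Finset (α × β)) (b : β) : ℕ :=
  (E.filter fun e => e.2 = b).card

/-- `E` (with vertex classes the whole of `α` and `β`) is `(ε,d)`-super-regular. -/
def IsSuperRegularBip {α β : Type*} [Fintype α] [Fintype β] (E : Finset (α × β))
    (ε d : ℝ) : Prop :=
  (∀ X : Finset α, ∀ Y : Finset β,
      ε * (Fintype.card α : ℝ) ≤ (X.card : ℝ) → ε * (Fintype.card β : ℝ) ≤ (Y.card : ℝ) →
      d - ε ≤ densBip E X Y ∧ densBip E X Y ≤ d + ε) ∧
  (∀ a : α, (d - ε) * (Fintype.card β : ℝ) ≤ (degL E a : ℝ) ∧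
            (degL E a : ℝ) ≤ (d + ε) * (Fintype.card β : ℝ)) ∧
  (∀ b : β, (d - ε) * (Fintype.card α : ℝ) ≤ (degR E b : ℝ) ∧
            (degR E b : ℝ) ≤ (d + ε) * (Fintype.card α : ℝ))

set_option maxHeartbeats 2000000 in
/-- an `(ε,d)`-super-regular pair splits into two edge-disjoint spanning
subgraphs, each `(2ε, d/2)`-super-regular. -/
theorem split_superregular_pair_into_two_superregular_subgraphs :
    ∃ c : ℝ, 0 < c ∧ c < 1 ∧
    ∀ d₀ : ℝ, 0 < d₀ → d₀ ≤ c →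
    ∃ ε₀ : ℝ, 0 < ε₀ ∧
    ∀ ε : ℝ, 0 < ε → ε ≤ ε₀ →
    ∃ m₀ : ℕ, ∀ d : ℝ, d₀ ≤ d →
    ∀ m : ℕ, m₀ ≤ m →
    ∀ (α β : Type) [Fintype α] [Fintype β],
      Fintype.card α = m → Fintype.card β = m →
    ∀ E : Finset (α × β),
      IsSuperRegularBip E ε d →
      ∃ S₁ S₂ : Finset (α × β),
        S₁ ⊆ E ∧ S₂ ⊆ E ∧ Disjoint S₁ S₂ ∧
        IsSuperRegularBip S₁ (2*ε) (d/2) ∧ IsSuperRegularBip S₂ (2*ε) (d/2) := by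
  refine ⟨1/2, by norm_num, by norm_num, ?_⟩
  intro d₀ hd₀ hd₀c
  refine ⟨d₀/10, by positivity, ?_⟩
  intro ε hε hεd
  refine ⟨max 3 ⌈(4096:ℝ)/ε^4⌉₊, ?_⟩
  intro d hdd m hm α β _ _ hα hβ E hE
  have hm3 : (3:ℕ) ≤ m := le_trans (le_max_left _ _) hm
  have hmR3 : (3:ℝ) ≤ (m:ℝ) := by exact_mod_cast hm3
  have hmpos : (0:ℝ) < m := by linarith
  have hε4m : (4096:ℝ) ≤ ε^4 * m := by
    have h1 : ⌈(4096:ℝ)/ε^4⌉₊ ≤ m := le_trans (le_max_right _ _) hm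
    have h2 : (4096:ℝ)/ε^4 ≤ m := le_trans (Nat.le_ceil _) (by exact_mod_cast h1)
    have hε4 : (0:ℝ) < ε^4 := by positivity
    rw [div_le_iff₀ hε4] at h2
    linarith [h2]
  have hεd' : ε ≤ d₀/10 := hεd
  have hdε : (9/10) * d₀ ≤ d - ε := by linarith
  -- d is at most 1 + ε
  have hβne : Nonempty β := by
    rw [← Fintype.card_pos_iff, hβ]; omega
  have hd1 : d ≤ 1 + ε := by
    obtain ⟨b⟩ := hβne
    have h1 := (hE.2.2 b).1
    have h2 : (degR E b : ℝ) ≤ (m:ℝ) := by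
      have : degR E b ≤ Fintype.card α := by
        rw [degR, ← Finset.card_univ]
        apply Finset.card_le_card_of_injOn Prod.fst (fun _ _ => Finset.mem_univ _)
        intro x hx y hy hxy
        have hx' := (Finset.mem_filter.mp hx).2
        have hy' := (Finset.mem_filter.mp hy).2
        exact Prod.ext hxy (hx'.trans hy'.symm)
      rw [← hα]; exact_mod_cast this
    rw [hα] at h1
    nlinarith
  classical
  set P := E.powerset with hP
  set Fxy : Finset α × Finset β → Finset (α × β) :=
    (fun q => E.filter fun e => e.1 ∈ q.1 ∧ e.2 ∈ q.2) with hFxy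
  set Fa : α → Finset (α × β) := (fun a => E.filter fun e => e.1 = a) with hFa
  set Fb : β → Finset (α × β) := (fun b => E.filter fun e => e.2 = b) with hFb
  set pairs : Finset (Finset α × Finset β) :=
    Finset.univ.filter (fun q => 2*ε*(m:ℝ) ≤ (q.1.card:ℝ) ∧ 2*ε*(m:ℝ) ≤ (q.2.card:ℝ))
    with hpairs
  -- existence of a good subset
  have hgood : ∃ S ∈ P,
      (∀ q ∈ pairs, |((S ∩ Fxy q).card : ℝ) - ((Fxy q).card : ℝ)/2|
          ≤ 3/2*ε*((q.1.card:ℝ)*(q.2.card:ℝ))) ∧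
      (∀ a : α, |((S ∩ Fa a).card : ℝ) - ((Fa a).card : ℝ)/2| ≤ 3/2*ε*(m:ℝ)) ∧
      (∀ b : β, |((S ∩ Fb b).card : ℝ) - ((Fb b).card : ℝ)/2| ≤ 3/2*ε*(m:ℝ)) := by
    have hε20 : ε ≤ 1/20 := by linarith
    -- bound for pair events
    have hBP : ∀ q ∈ pairs, ((P.filter fun S =>
        3/2*ε*((q.1.card:ℝ)*(q.2.card:ℝ))
          < |((S ∩ Fxy q).card : ℝ) - ((Fxy q).card : ℝ)/2|).card : ℝ)
        ≤ 2 * 2 ^ E.card * Real.exp (-(4*ε^4*(m:ℝ)^2)) := by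
      intro q hq
      rw [hpairs, Finset.mem_filter] at hq
      obtain ⟨-, hX, hY⟩ := hq
      have hXYpos : (0:ℝ) < (q.1.card:ℝ) * (q.2.card:ℝ) :=
        mul_pos (lt_of_lt_of_le (by positivity) hX) (lt_of_lt_of_le (by positivity) hY)
      have htb := tail_bound E (Fxy q) (Finset.filter_subset _ _)
        (3/2*ε*((q.1.card:ℝ)*(q.2.card:ℝ))) (by positivity)
      refine le_trans htb ?_
      have hnub : ((Fxy q).card : ℝ) ≤ (q.1.card:ℝ) * (q.2.card:ℝ) := by
        have hsub : Fxy q ⊆ q.1 ×ˢ q.2 := by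
          intro e he
          rw [hFxy] at he
          simp only [Finset.mem_filter] at he
          exact Finset.mem_product.mpr he.2
        calc ((Fxy q).card : ℝ) ≤ ((q.1 ×ˢ q.2).card : ℝ) := by
              exact_mod_cast Finset.card_le_card hsub
          _ = (q.1.card:ℝ) * (q.2.card:ℝ) := by rw [Finset.card_product]; push_cast; ring
      have heE : (eBip E q.1 q.2 : ℝ) = ((Fxy q).card : ℝ) := by
        congr 1
        try (unfold eBip; congr 1; ext e; simp only [Finset.mem_filter, Finset.mem_inter, hFxy])
      have hEd := hE.1 q.1 q.2 (by rw [hα]; nlinarith) (by rw [hβ]; nlinarith)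
      rw [densBip] at hEd
      have hel := (le_div_iff₀ hXYpos).mp hEd.1
      have hnlb : (0:ℝ) < ((Fxy q).card : ℝ) := by nlinarith
      refine mul_le_mul_of_nonneg_left (Real.exp_le_exp.mpr ?_) (by positivity)
      have h1 : (3/2*ε*((q.1.card:ℝ)*(q.2.card:ℝ)))^2 / (2*((q.1.card:ℝ)*(q.2.card:ℝ)))
          = 9/8*ε^2*((q.1.card:ℝ)*(q.2.card:ℝ)) := by
        field_simp
        ring
      have h2 : (3/2*ε*((q.1.card:ℝ)*(q.2.card:ℝ)))^2 / (2*((q.1.card:ℝ)*(q.2.card:ℝ)))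
          ≤ (3/2*ε*((q.1.card:ℝ)*(q.2.card:ℝ)))^2 / (2*((Fxy q).card:ℝ)) := by
        apply div_le_div_of_nonneg_left (by positivity) (by linarith) (by linarith)
      have h3 : 4*ε^4*(m:ℝ)^2 ≤ 9/8*ε^2*((q.1.card:ℝ)*(q.2.card:ℝ)) := by
        nlinarith [mul_le_mul hX hY (by positivity) (le_trans (by positivity) hX)]
      rw [neg_div]
      rw [h1] at h2
      linarith
    -- bound for left-degree events
    have hBA : ∀ a : α, ((P.filter fun S =>
        3/2*ε*(m:ℝ) < |((S ∩ Fa a).card : ℝ) - ((Fa a).card : ℝ)/2|).card : ℝ)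
        ≤ 2 * 2 ^ E.card * Real.exp (-(ε^2*(m:ℝ)/2)) := by
      intro a
      have htb := tail_bound E (Fa a) (Finset.filter_subset _ _) (3/2*ε*(m:ℝ)) (by positivity)
      refine le_trans htb ?_
      have heE : (degL E a : ℝ) = ((Fa a).card : ℝ) := by
        congr 1
        try (unfold degL; congr 1; ext e; simp only [Finset.mem_filter, Finset.mem_inter, hFa])
      have hdeg := hE.2.1 a
      rw [hβ] at hdeg
      have hnlb : (0:ℝ) < ((Fa a).card : ℝ) := by nlinarith [hdeg.1]
      have hnub : ((Fa a).card : ℝ) ≤ 2*(m:ℝ) := by nlinarith [hdeg.2]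
      refine mul_le_mul_of_nonneg_left (Real.exp_le_exp.mpr ?_) (by positivity)
      have h1 : (3/2*ε*(m:ℝ))^2 / (2*(2*(m:ℝ))) = 9/16*ε^2*(m:ℝ) := by
        field_simp
        ring
      have h2 : (3/2*ε*(m:ℝ))^2 / (2*(2*(m:ℝ))) ≤ (3/2*ε*(m:ℝ))^2 / (2*((Fa a).card:ℝ)) := by
        apply div_le_div_of_nonneg_left (by positivity) (by linarith) (by linarith)
      rw [neg_div]
      rw [h1] at h2
      nlinarith [h2]
    -- bound for right-degree events
    have hBB : ∀ b : β, ((P.filter fun S =>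
        3/2*ε*(m:ℝ) < |((S ∩ Fb b).card : ℝ) - ((Fb b).card : ℝ)/2|).card : ℝ)
        ≤ 2 * 2 ^ E.card * Real.exp (-(ε^2*(m:ℝ)/2)) := by
      intro b
      have htb := tail_bound E (Fb b) (Finset.filter_subset _ _) (3/2*ε*(m:ℝ)) (by positivity)
      refine le_trans htb ?_
      have heE : (degR E b : ℝ) = ((Fb b).card : ℝ) := by
        congr 1
        try (unfold degR; congr 1; ext e; simp only [Finset.mem_filter, Finset.mem_inter, hFb])
      have hdeg := hE.2.2 b
      rw [hα] at hdeg
      have hnlb : (0:ℝ) < ((Fb b).card : ℝ) := by nlinarith [hdeg.1]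
      have hnub : ((Fb b).card : ℝ) ≤ 2*(m:ℝ) := by nlinarith [hdeg.2]
      refine mul_le_mul_of_nonneg_left (Real.exp_le_exp.mpr ?_) (by positivity)
      have h1 : (3/2*ε*(m:ℝ))^2 / (2*(2*(m:ℝ))) = 9/16*ε^2*(m:ℝ) := by
        field_simp
        ring
      have h2 : (3/2*ε*(m:ℝ))^2 / (2*(2*(m:ℝ))) ≤ (3/2*ε*(m:ℝ))^2 / (2*((Fb b).card:ℝ)) := by
        apply div_le_div_of_nonneg_left (by positivity) (by linarith) (by linarith)
      rw [neg_div]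
      rw [h1] at h2
      nlinarith [h2]
    -- numeric facts
    have hexp1 : (2:ℝ) ≤ Real.exp 1 := by
      have := Real.add_one_le_exp (1:ℝ)
      linarith
    have key1 : (4:ℝ)^m * (2 * Real.exp (-(4*ε^4*(m:ℝ)^2))) ≤ 1/4 := by
      have he2 : (4:ℝ) ≤ Real.exp 2 := by
        have h2 : Real.exp 2 = Real.exp 1 * Real.exp 1 := by
          rw [← Real.exp_add]; norm_num
        nlinarith
      have h4m : (4:ℝ)^m ≤ Real.exp (2*(m:ℝ)) := by
        calc (4:ℝ)^m ≤ (Real.exp 2)^m := pow_le_pow_left₀ (by norm_num) he2 m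
          _ = Real.exp (2*(m:ℝ)) := by rw [mul_comm]; exact (Real.exp_nat_mul 2 m).symm
      have hstep : (4:ℝ)^m * (2 * Real.exp (-(4*ε^4*(m:ℝ)^2)))
          ≤ 2 * Real.exp (2*(m:ℝ) + -(4*ε^4*(m:ℝ)^2)) := by
        rw [Real.exp_add]
        nlinarith [Real.exp_pos (-(4*ε^4*(m:ℝ)^2)), h4m]
      have hexpo : 2*(m:ℝ) + -(4*ε^4*(m:ℝ)^2) ≤ -3 := by
        nlinarith [mul_le_mul_of_nonneg_right hε4m hmpos.le]
      have h8 : (8:ℝ) ≤ Real.exp 3 := by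
        have h3 : Real.exp 3 = Real.exp 1 * Real.exp 1 * Real.exp 1 := by
          rw [← Real.exp_add, ← Real.exp_add]; norm_num
        nlinarith
      have : Real.exp (2*(m:ℝ) + -(4*ε^4*(m:ℝ)^2)) ≤ Real.exp (-3) :=
        Real.exp_le_exp.mpr hexpo
      have hinv : Real.exp (-3) ≤ 1/8 := by
        rw [Real.exp_neg]
        rw [inv_le_comm₀ (Real.exp_pos 3) (by norm_num)]
        linarith
      linarith
    have key2 : (m:ℝ) * (2 * Real.exp (-(ε^2*(m:ℝ)/2))) ≤ 1/4 := by
      have hx : 256*(m:ℝ) ≤ Real.exp (ε^2*(m:ℝ)/2) := by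
        have h2 : Real.exp (ε^2*(m:ℝ)/2)
            = Real.exp (ε^2*(m:ℝ)/4) * Real.exp (ε^2*(m:ℝ)/4) := by
          rw [← Real.exp_add]; ring_nf
        have h3 := Real.add_one_le_exp (ε^2*(m:ℝ)/4)
        have h4 : (0:ℝ) ≤ ε^2*(m:ℝ)/4 := by positivity
        nlinarith [mul_le_mul_of_nonneg_right hε4m hmpos.le]
      have h5 : (Real.exp (ε^2*(m:ℝ)/2))⁻¹ ≤ (256*(m:ℝ))⁻¹ := by
        apply inv_anti₀ (by positivity) hx
      rw [Real.exp_neg]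
      calc (m:ℝ) * (2 * (Real.exp (ε^2*(m:ℝ)/2))⁻¹)
          ≤ (m:ℝ) * (2 * (256*(m:ℝ))⁻¹) := by
            refine mul_le_mul_of_nonneg_left (mul_le_mul_of_nonneg_left h5 (by norm_num))
              hmpos.le
        _ = 1/128 := by
            field_simp
            ring
        _ ≤ 1/4 := by norm_num
    -- union bound
    set U1 : Finset (Finset (α × β)) := pairs.biUnion (fun q => P.filter fun S =>
        3/2*ε*((q.1.card:ℝ)*(q.2.card:ℝ))
          < |((S ∩ Fxy q).card : ℝ) - ((Fxy q).card : ℝ)/2|) with hU1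
    set U2 : Finset (Finset (α × β)) := Finset.univ.biUnion (fun a : α => P.filter fun S =>
        3/2*ε*(m:ℝ) < |((S ∩ Fa a).card : ℝ) - ((Fa a).card : ℝ)/2|) with hU2
    set U3 : Finset (Finset (α × β)) := Finset.univ.biUnion (fun b : β => P.filter fun S =>
        3/2*ε*(m:ℝ) < |((S ∩ Fb b).card : ℝ) - ((Fb b).card : ℝ)/2|) with hU3
    have hsub : P.filter (fun S => ¬ ((∀ q ∈ pairs,
        |((S ∩ Fxy q).card : ℝ) - ((Fxy q).card : ℝ)/2|
          ≤ 3/2*ε*((q.1.card:ℝ)*(q.2.card:ℝ))) ∧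
        (∀ a : α, |((S ∩ Fa a).card : ℝ) - ((Fa a).card : ℝ)/2| ≤ 3/2*ε*(m:ℝ)) ∧
        (∀ b : β, |((S ∩ Fb b).card : ℝ) - ((Fb b).card : ℝ)/2| ≤ 3/2*ε*(m:ℝ))))
        ⊆ U1 ∪ U2 ∪ U3 := by
      intro S hS
      obtain ⟨hSP, hbad⟩ := Finset.mem_filter.mp hS
      by_cases h1 : ∀ q ∈ pairs, |((S ∩ Fxy q).card : ℝ) - ((Fxy q).card : ℝ)/2|
          ≤ 3/2*ε*((q.1.card:ℝ)*(q.2.card:ℝ))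
      · by_cases h2 : ∀ a : α, |((S ∩ Fa a).card : ℝ) - ((Fa a).card : ℝ)/2| ≤ 3/2*ε*(m:ℝ)
        · have h3 : ¬ ∀ b : β, |((S ∩ Fb b).card : ℝ) - ((Fb b).card : ℝ)/2| ≤ 3/2*ε*(m:ℝ) :=
            fun h3 => hbad ⟨h1, h2, h3⟩
          push_neg at h3
          obtain ⟨b, hb⟩ := h3
          exact Finset.mem_union_right _ (Finset.mem_biUnion.mpr
            ⟨b, Finset.mem_univ _, Finset.mem_filter.mpr ⟨hSP, hb⟩⟩)
        · push_neg at h2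
          obtain ⟨a, ha⟩ := h2
          refine Finset.mem_union_left _ (Finset.mem_union_right _ (Finset.mem_biUnion.mpr
            ⟨a, Finset.mem_univ _, Finset.mem_filter.mpr ⟨hSP, ha⟩⟩))
      · push_neg at h1
        obtain ⟨q, hq, hlt⟩ := h1
        refine Finset.mem_union_left _ (Finset.mem_union_left _ (Finset.mem_biUnion.mpr
          ⟨q, hq, Finset.mem_filter.mpr ⟨hSP, hlt⟩⟩))
    have hpairscard : ((pairs.card : ℕ) : ℝ) ≤ (4:ℝ)^m := by
      have h1 : pairs.card ≤ (Finset.univ : Finset (Finset α × Finset β)).card :=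
        Finset.card_filter_le _ _
      rw [Finset.card_univ, Fintype.card_prod, Fintype.card_finset, Fintype.card_finset,
        hα, hβ] at h1
      calc ((pairs.card : ℕ) : ℝ) ≤ ((2^m * 2^m : ℕ) : ℝ) := by exact_mod_cast h1
        _ = (4:ℝ)^m := by push_cast; rw [← mul_pow]; norm_num
    have hU1card : ((U1.card : ℕ) : ℝ)
        ≤ (4:ℝ)^m * (2 * 2 ^ E.card * Real.exp (-(4*ε^4*(m:ℝ)^2))) := by
      calc ((U1.card : ℕ) : ℝ)
          ≤ ((∑ q ∈ pairs, (P.filter fun S =>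
              3/2*ε*((q.1.card:ℝ)*(q.2.card:ℝ))
                < |((S ∩ Fxy q).card : ℝ) - ((Fxy q).card : ℝ)/2|).card : ℕ) : ℝ) :=
            Nat.cast_le.mpr Finset.card_biUnion_le
        _ = ∑ q ∈ pairs, ((P.filter fun S =>
              3/2*ε*((q.1.card:ℝ)*(q.2.card:ℝ))
                < |((S ∩ Fxy q).card : ℝ) - ((Fxy q).card : ℝ)/2|).card : ℝ) :=
            Nat.cast_sum _ _
        _ ≤ ∑ _q ∈ pairs, (2 * 2 ^ E.card * Real.exp (-(4*ε^4*(m:ℝ)^2))) :=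
            Finset.sum_le_sum hBP
        _ = (pairs.card : ℝ) * (2 * 2 ^ E.card * Real.exp (-(4*ε^4*(m:ℝ)^2))) := by
            rw [Finset.sum_const, nsmul_eq_mul]
        _ ≤ (4:ℝ)^m * (2 * 2 ^ E.card * Real.exp (-(4*ε^4*(m:ℝ)^2))) := by
            refine mul_le_mul_of_nonneg_right hpairscard (by positivity)
    have hU2card : ((U2.card : ℕ) : ℝ)
        ≤ (m:ℝ) * (2 * 2 ^ E.card * Real.exp (-(ε^2*(m:ℝ)/2))) := by
      calc ((U2.card : ℕ) : ℝ)
          ≤ ((∑ a : α, (P.filter fun S =>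
              3/2*ε*(m:ℝ) < |((S ∩ Fa a).card : ℝ) - ((Fa a).card : ℝ)/2|).card : ℕ) : ℝ) := by
            exact_mod_cast Finset.card_biUnion_le
        _ = ∑ a : α, ((P.filter fun S =>
              3/2*ε*(m:ℝ) < |((S ∩ Fa a).card : ℝ) - ((Fa a).card : ℝ)/2|).card : ℝ) := by
            push_cast; ring
        _ ≤ ∑ _a : α, (2 * 2 ^ E.card * Real.exp (-(ε^2*(m:ℝ)/2))) :=
            Finset.sum_le_sum (fun a _ => hBA a)
        _ = (m:ℝ) * (2 * 2 ^ E.card * Real.exp (-(ε^2*(m:ℝ)/2))) := by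
            rw [Finset.sum_const, nsmul_eq_mul, Finset.card_univ, hα]
    have hU3card : ((U3.card : ℕ) : ℝ)
        ≤ (m:ℝ) * (2 * 2 ^ E.card * Real.exp (-(ε^2*(m:ℝ)/2))) := by
      calc ((U3.card : ℕ) : ℝ)
          ≤ ((∑ b : β, (P.filter fun S =>
              3/2*ε*(m:ℝ) < |((S ∩ Fb b).card : ℝ) - ((Fb b).card : ℝ)/2|).card : ℕ) : ℝ) := by
            exact_mod_cast Finset.card_biUnion_le
        _ = ∑ b : β, ((P.filter fun S =>
              3/2*ε*(m:ℝ) < |((S ∩ Fb b).card : ℝ) - ((Fb b).card : ℝ)/2|).card : ℝ) := by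
            push_cast; ring
        _ ≤ ∑ _b : β, (2 * 2 ^ E.card * Real.exp (-(ε^2*(m:ℝ)/2))) :=
            Finset.sum_le_sum (fun b _ => hBB b)
        _ = (m:ℝ) * (2 * 2 ^ E.card * Real.exp (-(ε^2*(m:ℝ)/2))) := by
            rw [Finset.sum_const, nsmul_eq_mul, Finset.card_univ, hβ]
    have hPcard : ((P.card : ℕ) : ℝ) = (2:ℝ) ^ E.card := by
      rw [hP, Finset.card_powerset]; push_cast; ring
    have hbadlt : ((P.filter (fun S => ¬ ((∀ q ∈ pairs,
        |((S ∩ Fxy q).card : ℝ) - ((Fxy q).card : ℝ)/2|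
          ≤ 3/2*ε*((q.1.card:ℝ)*(q.2.card:ℝ))) ∧
        (∀ a : α, |((S ∩ Fa a).card : ℝ) - ((Fa a).card : ℝ)/2| ≤ 3/2*ε*(m:ℝ)) ∧
        (∀ b : β, |((S ∩ Fb b).card : ℝ) - ((Fb b).card : ℝ)/2| ≤ 3/2*ε*(m:ℝ))))).card : ℝ)
        < ((P.card : ℕ) : ℝ) := by
      have hc1 : ((P.filter (fun S => ¬ ((∀ q ∈ pairs,
        |((S ∩ Fxy q).card : ℝ) - ((Fxy q).card : ℝ)/2|
          ≤ 3/2*ε*((q.1.card:ℝ)*(q.2.card:ℝ))) ∧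
        (∀ a : α, |((S ∩ Fa a).card : ℝ) - ((Fa a).card : ℝ)/2| ≤ 3/2*ε*(m:ℝ)) ∧
        (∀ b : β, |((S ∩ Fb b).card : ℝ) - ((Fb b).card : ℝ)/2| ≤ 3/2*ε*(m:ℝ))))).card : ℝ) ≤ ((U1 ∪ U2 ∪ U3).card : ℝ) := by
        exact_mod_cast Finset.card_le_card hsub
      have hc2 : (((U1 ∪ U2 ∪ U3).card : ℕ) : ℝ) ≤ ((U1.card : ℝ)) + (U2.card : ℝ) + (U3.card : ℝ) := by
        have := le_trans (Finset.card_union_le (U1 ∪ U2) U3)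
          (Nat.add_le_add_right (Finset.card_union_le U1 U2) U3.card)
        exact_mod_cast this
      have hpow : (0:ℝ) < (2:ℝ) ^ E.card := by positivity
      have e1 : (4:ℝ)^m * (2 * 2 ^ E.card * Real.exp (-(4*ε^4*(m:ℝ)^2)))
          = ((4:ℝ)^m * (2 * Real.exp (-(4*ε^4*(m:ℝ)^2)))) * 2 ^ E.card := by ring
      have e2 : (m:ℝ) * (2 * 2 ^ E.card * Real.exp (-(ε^2*(m:ℝ)/2)))
          = ((m:ℝ) * (2 * Real.exp (-(ε^2*(m:ℝ)/2)))) * 2 ^ E.card := by ring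
      rw [hPcard]
      calc ((P.filter (fun S => ¬ ((∀ q ∈ pairs,
        |((S ∩ Fxy q).card : ℝ) - ((Fxy q).card : ℝ)/2|
          ≤ 3/2*ε*((q.1.card:ℝ)*(q.2.card:ℝ))) ∧
        (∀ a : α, |((S ∩ Fa a).card : ℝ) - ((Fa a).card : ℝ)/2| ≤ 3/2*ε*(m:ℝ)) ∧
        (∀ b : β, |((S ∩ Fb b).card : ℝ) - ((Fb b).card : ℝ)/2| ≤ 3/2*ε*(m:ℝ))))).card : ℝ) ≤ (U1.card : ℝ) + (U2.card : ℝ) + (U3.card : ℝ) :=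
            le_trans hc1 hc2
        _ ≤ (1/4) * 2 ^ E.card + (1/4) * 2 ^ E.card + (1/4) * 2 ^ E.card := by
            refine add_le_add (add_le_add ?_ ?_) ?_
            · refine le_trans hU1card ?_
              rw [e1]
              exact mul_le_mul_of_nonneg_right key1 hpow.le
            · refine le_trans hU2card ?_
              rw [e2]
              exact mul_le_mul_of_nonneg_right key2 hpow.le
            · refine le_trans hU3card ?_
              rw [e2]
              exact mul_le_mul_of_nonneg_right key2 hpow.le
        _ < (2:ℝ) ^ E.card := by linarith
    -- extract a good subset
    have hne : (P.filter (fun S => (∀ q ∈ pairs,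
        |((S ∩ Fxy q).card : ℝ) - ((Fxy q).card : ℝ)/2|
          ≤ 3/2*ε*((q.1.card:ℝ)*(q.2.card:ℝ))) ∧
        (∀ a : α, |((S ∩ Fa a).card : ℝ) - ((Fa a).card : ℝ)/2| ≤ 3/2*ε*(m:ℝ)) ∧
        (∀ b : β, |((S ∩ Fb b).card : ℝ) - ((Fb b).card : ℝ)/2| ≤ 3/2*ε*(m:ℝ)))).Nonempty := by
      rw [← Finset.card_pos]
      by_contra hzero
      push_neg at hzero
      have h0 : (P.filter _).card = 0 := Nat.le_zero.mp hzero
      have htot := Finset.card_filter_add_card_filter_not (s := P)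
        (p := fun S => (∀ q ∈ pairs,
          |((S ∩ Fxy q).card : ℝ) - ((Fxy q).card : ℝ)/2|
            ≤ 3/2*ε*((q.1.card:ℝ)*(q.2.card:ℝ))) ∧
          (∀ a : α, |((S ∩ Fa a).card : ℝ) - ((Fa a).card : ℝ)/2| ≤ 3/2*ε*(m:ℝ)) ∧
          (∀ b : β, |((S ∩ Fb b).card : ℝ) - ((Fb b).card : ℝ)/2| ≤ 3/2*ε*(m:ℝ)))
      rw [h0, zero_add] at htot
      rw [htot] at hbadlt
      exact lt_irrefl _ hbadlt
    obtain ⟨S, hS⟩ := hne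
    obtain ⟨hSP, hgood⟩ := Finset.mem_filter.mp hS
    exact ⟨S, hSP, hgood⟩

  obtain ⟨S, hSP, hGP, hGA, hGB⟩ := hgood
  have hSE : S ⊆ E := Finset.mem_powerset.mp hSP
  -- the mirror identity for E \ S
  have hmirror : ∀ F : Finset (α × β), F ⊆ E →
      (((E \ S) ∩ F).card : ℝ) = (F.card : ℝ) - ((S ∩ F).card : ℝ) := by
    intro F hFE
    have h1 : (E \ S) ∩ F = F \ (S ∩ F) := by
      ext e
      simp only [Finset.mem_inter, Finset.mem_sdiff]
      constructor
      · rintro ⟨⟨hE', hS'⟩, hF⟩; exact ⟨hF, fun h => hS' h.1⟩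
      · rintro ⟨hF, hS'⟩
        exact ⟨⟨hFE hF, fun h => hS' ⟨h, hF⟩⟩, hF⟩
    rw [h1, Finset.card_sdiff_of_subset (Finset.inter_subset_right)]
    have : (S ∩ F).card ≤ F.card := Finset.card_le_card Finset.inter_subset_right
    push_cast [Nat.cast_sub this]
    ring
  -- main claim: any subset with the deviation properties is (2ε, d/2)-super-regular
  have claim : ∀ T : Finset (α × β), T ⊆ E →
      (∀ q ∈ pairs, |((T ∩ Fxy q).card : ℝ) - ((Fxy q).card : ℝ)/2|
          ≤ 3/2*ε*((q.1.card:ℝ)*(q.2.card:ℝ))) →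
      (∀ a : α, |((T ∩ Fa a).card : ℝ) - ((Fa a).card : ℝ)/2| ≤ 3/2*ε*(m:ℝ)) →
      (∀ b : β, |((T ∩ Fb b).card : ℝ) - ((Fb b).card : ℝ)/2| ≤ 3/2*ε*(m:ℝ)) →
      IsSuperRegularBip T (2*ε) (d/2) := by
    intro T hTE hDP hDA hDB
    refine ⟨?_, ?_, ?_⟩
    · -- densities
      intro X Y hX hY
      rw [hα] at hX
      rw [hβ] at hY
      have hq : (X, Y) ∈ pairs := by
        rw [hpairs]
        simp only [Finset.mem_filter]
        exact ⟨Finset.mem_univ _, hX, hY⟩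
      have hdev := hDP (X, Y) hq
      simp only at hdev
      have hXpos : (0:ℝ) < X.card := lt_of_lt_of_le (by positivity) hX
      have hYpos : (0:ℝ) < Y.card := lt_of_lt_of_le (by positivity) hY
      have hXY : (0:ℝ) < (X.card:ℝ) * (Y.card:ℝ) := mul_pos hXpos hYpos
      have heT : (eBip T X Y : ℝ) = ((T ∩ Fxy (X, Y)).card : ℝ) := by
        congr 1
        unfold eBip
        congr 1
        ext e
        simp only [Finset.mem_filter, Finset.mem_inter, hFxy]
        exact ⟨fun h => ⟨h.1, hTE h.1, h.2⟩, fun h => ⟨h.1, h.2.2⟩⟩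
      have heE : (eBip E X Y : ℝ) = ((Fxy (X, Y)).card : ℝ) := by
        congr 1
        try (unfold eBip; congr 1; ext e; simp only [Finset.mem_filter, Finset.mem_inter, hFxy])
      have hEd := hE.1 X Y (by rw [hα]; nlinarith) (by rw [hβ]; nlinarith)
      rw [densBip] at hEd
      have hel : (d - ε) * ((X.card:ℝ) * (Y.card:ℝ)) ≤ (eBip E X Y : ℝ) :=
        (le_div_iff₀ hXY).mp hEd.1
      have heu : (eBip E X Y : ℝ) ≤ (d + ε) * ((X.card:ℝ) * (Y.card:ℝ)) :=
        (div_le_iff₀ hXY).mp hEd.2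
      obtain ⟨hdl, hdu⟩ := abs_le.mp hdev
      rw [← heT, ← heE] at hdl hdu
      rw [densBip]
      constructor
      · rw [le_div_iff₀ hXY]
        nlinarith
      · rw [div_le_iff₀ hXY]
        nlinarith
    · -- left degrees
      intro a
      rw [hβ]
      have hdeg := hE.2.1 a
      rw [hβ] at hdeg
      have heT : (degL T a : ℝ) = ((T ∩ Fa a).card : ℝ) := by
        congr 1
        unfold degL
        congr 1
        ext e
        simp only [Finset.mem_filter, Finset.mem_inter, hFa]
        exact ⟨fun h => ⟨h.1, hTE h.1, h.2⟩, fun h => ⟨h.1, h.2.2⟩⟩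
      have heE : (degL E a : ℝ) = ((Fa a).card : ℝ) := by
        congr 1
        try (unfold degL; congr 1; ext e; simp only [Finset.mem_filter, Finset.mem_inter, hFa])
      obtain ⟨hdl, hdu⟩ := abs_le.mp (hDA a)
      rw [← heT, ← heE] at hdl hdu
      constructor <;> nlinarith [hdeg.1, hdeg.2]
    · -- right degrees
      intro b
      rw [hα]
      have hdeg := hE.2.2 b
      rw [hα] at hdeg
      have heT : (degR T b : ℝ) = ((T ∩ Fb b).card : ℝ) := by
        congr 1
        unfold degR
        congr 1
        ext e
        simp only [Finset.mem_filter, Finset.mem_inter, hFb]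
        exact ⟨fun h => ⟨h.1, hTE h.1, h.2⟩, fun h => ⟨h.1, h.2.2⟩⟩
      have heE : (degR E b : ℝ) = ((Fb b).card : ℝ) := by
        congr 1
        try (unfold degR; congr 1; ext e; simp only [Finset.mem_filter, Finset.mem_inter, hFb])
      obtain ⟨hdl, hdu⟩ := abs_le.mp (hDB b)
      rw [← heT, ← heE] at hdl hdu
      constructor <;> nlinarith [hdeg.1, hdeg.2]

  refine ⟨S, E \ S, hSE, Finset.sdiff_subset, Finset.sdiff_disjoint.symm, ?_, ?_⟩
  · exact claim S hSE hGP hGA hGB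
  · refine claim (E \ S) Finset.sdiff_subset ?_ ?_ ?_
    · intro q hq
      rw [hmirror (Fxy q) (Finset.filter_subset _ _)]
      calc |((Fxy q).card : ℝ) - ((S ∩ Fxy q).card : ℝ) - ((Fxy q).card : ℝ)/2|
          = |((S ∩ Fxy q).card : ℝ) - ((Fxy q).card : ℝ)/2| := by
            rw [show ((Fxy q).card : ℝ) - ((S ∩ Fxy q).card : ℝ) - ((Fxy q).card : ℝ)/2
              = -(((S ∩ Fxy q).card : ℝ) - ((Fxy q).card : ℝ)/2) by ring, abs_neg]
        _ ≤ _ := hGP q hq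
    · intro a
      rw [hmirror (Fa a) (Finset.filter_subset _ _)]
      calc |((Fa a).card : ℝ) - ((S ∩ Fa a).card : ℝ) - ((Fa a).card : ℝ)/2|
          = |((S ∩ Fa a).card : ℝ) - ((Fa a).card : ℝ)/2| := by
            rw [show ((Fa a).card : ℝ) - ((S ∩ Fa a).card : ℝ) - ((Fa a).card : ℝ)/2
              = -(((S ∩ Fa a).card : ℝ) - ((Fa a).card : ℝ)/2) by ring, abs_neg]
        _ ≤ _ := hGA a
    · intro b
      rw [hmirror (Fb b) (Finset.filter_subset _ _)]
      calc |((Fb b).card : ℝ) - ((S ∩ Fb b).card : ℝ) - ((Fb b).card : ℝ)/2|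
          = |((S ∩ Fb b).card : ℝ) - ((Fb b).card : ℝ)/2| := by
            rw [show ((Fb b).card : ℝ) - ((S ∩ Fb b).card : ℝ) - ((Fb b).card : ℝ)/2
              = -(((S ∩ Fb b).card : ℝ) - ((Fb b).card : ℝ)/2) by ring, abs_neg]
        _ ≤ _ := hGB b
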